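/- arXiv:1711.00651 — 2 statements merged into one kernel-verified Lean document; each statement's English description precedes it below -/
import Mathlib

section
/- For any synchronizing automaton 𝒜 with n ≥ 2 states, any v-minimal word u and any i ∈ supp(u), the number of equivalence classes of ℐ_i under ∼_i is at most D(2, Rnk(ℐ_i), n) + 1. -/
open scoped BigOperators

set_option synthInstance.maxHeartbeats 1000000
set_option maxHeartbeats 1000000

noncomputable section

/-- Action of a word on a state: `q · u`. -/
def actW {Q A : Type*} (δ : Q → A → Q) (q : Q) (u : List A) : Q :=
  u.foldl δ q

/-- The image `Q · u` of the full state set under a word. -/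
def imageSet {Q A : Type*} [Fintype Q] [DecidableEq Q] (δ : Q → A → Q) (u : List A) :
    Finset Q :=
  Finset.image (fun q => actW δ q u) Finset.univ

/-- The rank `rk(u) = |Q · u|` of a word. -/
def wordRank {Q A : Type*} [Fintype Q] [DecidableEq Q] (δ : Q → A → Q) (u : List A) : ℕ :=
  (imageSet δ u).card

/-- A word is reset (synchronizing) if `|Q · u| = 1`. -/
def IsReset {Q A : Type*} [Fintype Q] [DecidableEq Q] (δ : Q → A → Q) (u : List A) : Prop :=
  wordRank δ u = 1

/-- The automaton is synchronizing if it admits a reset word. -/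
def IsSynchronizing {Q A : Type*} [Fintype Q] [DecidableEq Q] (δ : Q → A → Q) : Prop :=
  ∃ u : List A, IsReset δ u

/-- `Syn(𝒜)`, the set of reset words. -/
def SynWords {Q A : Type*} [Fintype Q] [DecidableEq Q] (δ : Q → A → Q) : Set (List A) :=
  {u | IsReset δ u}

/-- The hyperplane `w⊥ = {v ∈ ℂQ : ∑ q, v q = 0}`. -/
def Wperp (Q : Type*) [Fintype Q] : Submodule ℂ (Q → ℂ) :=
  LinearMap.ker (∑ q : Q, (LinearMap.proj q : (Q → ℂ) →ₗ[ℂ] ℂ))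

theorem mem_Wperp {Q : Type*} [Fintype Q] (v : Q → ℂ) :
    v ∈ Wperp Q ↔ ∑ q : Q, v q = 0 := by
  simp [Wperp, LinearMap.mem_ker, LinearMap.sum_apply]

/-- The (right) action of a word on row vectors `v ↦ v·π(u)`. -/
def piLin {Q A : Type*} [Fintype Q] [DecidableEq Q] (δ : Q → A → Q) (u : List A) :
    (Q → ℂ) →ₗ[ℂ] (Q → ℂ) where
  toFun v := fun p => ∑ q ∈ Finset.univ.filter (fun q => actW δ q u = p), v q
  map_add' := by
    intro a b; funext p; simp [Finset.sum_add_distrib]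
  map_smul' := by
    intro c v; funext p; simp [Finset.mul_sum]

theorem piLin_mem {Q A : Type*} [Fintype Q] [DecidableEq Q] (δ : Q → A → Q) (u : List A) :
    ∀ v ∈ Wperp Q, piLin δ u v ∈ Wperp Q := by
  intro v hv
  rw [mem_Wperp] at hv ⊢
  have h := Finset.sum_fiberwise (Finset.univ : Finset Q) (fun q => actW δ q u) v
  calc ∑ p : Q, piLin δ u v p
      = ∑ p : Q, ∑ q ∈ Finset.univ.filter (fun q => actW δ q u = p), v q := rfl
    _ = ∑ q : Q, v q := h
    _ = 0 := hv

/-- The endomorphism of `w⊥` induced by a word. -/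
def rhoEnd {Q A : Type*} [Fintype Q] [DecidableEq Q] (δ : Q → A → Q) (u : List A) :
    Module.End ℂ (Wperp Q) :=
  (piLin δ u).restrict (piLin_mem δ u)

/-- The representation `ρ : Σ* → End(w⊥)`; we record it in the multiplicative opposite so
that `ρ (u ++ v) = ρ u * ρ v` (the paper's right-action convention). -/
def rho {Q A : Type*} [Fintype Q] [DecidableEq Q] (δ : Q → A → Q) (u : List A) :
    (Module.End ℂ (Wperp Q))ᵐᵒᵖ :=
  MulOpposite.op (rhoEnd δ u)

/-- `ℛ`, the ℂ-subalgebra generated by `ρ(Σ*)`. -/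
def Ralg {Q A : Type*} [Fintype Q] [DecidableEq Q] (δ : Q → A → Q) :
    Subalgebra ℂ (Module.End ℂ (Wperp Q))ᵐᵒᵖ :=
  Algebra.adjoin ℂ (Set.range (rho δ))

/-- `ρ(u)` seen as an element of `ℛ`. -/
def rhoR {Q A : Type*} [Fintype Q] [DecidableEq Q] (δ : Q → A → Q) (u : List A) :
    Ralg δ :=
  ⟨rho δ u, Algebra.subset_adjoin (Set.mem_range_self u)⟩

/-- The Jacobson radical `Rad(ℛ)` of `ℛ`, realised as a subset of the ambient algebra via
the standard characterisation: `x ∈ Rad(ℛ)` iff `x ∈ ℛ` and for every `y ∈ ℛ` the element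
`1 - y * x` is left-invertible in `ℛ`. -/
def RadSet {Q A : Type*} [Fintype Q] [DecidableEq Q] (δ : Q → A → Q) :
    Set (Module.End ℂ (Wperp Q))ᵐᵒᵖ :=
  {x | x ∈ Ralg δ ∧ ∀ y ∈ Ralg δ, ∃ z ∈ Ralg δ, z * (1 - y * x) = 1}

/-- `Rad(𝒜)`: the set of radical words, i.e. words `u` with `ρ(u) ∈ Rad(ℛ)`. -/
def RadWords {Q A : Type*} [Fintype Q] [DecidableEq Q] (δ : Q → A → Q) : Set (List A) :=
  {u | rho δ u ∈ RadSet δ}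

/-- The automaton is semisimple when `Rad(𝒜) = Syn(𝒜)`. -/
def IsSemisimple {Q A : Type*} [Fintype Q] [DecidableEq Q] (δ : Q → A → Q) : Prop :=
  RadWords δ = SynWords δ

/-- The `t`-packing number `D(t,r,n)`: the maximum size of a family of `r`-subsets of an
`n`-set in which every `t`-subset is contained in at most one member. -/
def packingNumber (t r n : ℕ) : ℕ :=
  sSup {m | ∃ F : Finset (Finset (Fin n)), F.card = m ∧ (∀ S ∈ F, S.card = r) ∧
    ∀ T : Finset (Fin n), T.card = t → (F.filter fun S => T ⊆ S).card ≤ 1}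

/-- The former-rank `Fr(𝒜)`: the least rank of a non-reset word. -/
def formerRank {Q A : Type*} [Fintype Q] [DecidableEq Q] (δ : Q → A → Q) : ℕ :=
  sInf {m | ∃ u : List A, ¬ IsReset δ u ∧ wordRank δ u = m}

/-- `Fs(𝒜)`: the set of former-synchronizing words. -/
def Fs {Q A : Type*} [Fintype Q] [DecidableEq Q] (δ : Q → A → Q) : Set (List A) :=
  {u | wordRank δ u = formerRank δ}

/-- `θ_i(u)`: the image of `ρ(u)` in the `i`-th Wedderburn–Artin matrix component, where
`e : ℛ → ∏ i, M_{n_i}(ℂ)` is the quotient map `ψ` followed by the fixed isomorphism. -/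
def theta {Q A : Type*} [Fintype Q] [DecidableEq Q] (δ : Q → A → Q) {k : ℕ} {nn : Fin k → ℕ}
    (e : Ralg δ →ₐ[ℂ] ∀ i : Fin k, Matrix (Fin (nn i)) (Fin (nn i)) ℂ)
    (u : List A) (i : Fin k) : Matrix (Fin (nn i)) (Fin (nn i)) ℂ :=
  e (rhoR δ u) i

/-- `supp(v) = {i : θ_i(v) ≠ 0}`. -/
def suppW {Q A : Type*} [Fintype Q] [DecidableEq Q] (δ : Q → A → Q) {k : ℕ} {nn : Fin k → ℕ}
    (e : Ralg δ →ₐ[ℂ] ∀ i : Fin k, Matrix (Fin (nn i)) (Fin (nn i)) ℂ)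
    (v : List A) : Set (Fin k) :=
  {i | theta δ e v i ≠ 0}

/-- `u ∈ Σ* v Σ*`, i.e. `v` is a factor of `u`. -/
def InFactor {A : Type*} (v u : List A) : Prop :=
  ∃ a b : List A, u = a ++ v ++ b

/-- `u` is a `v`-minimal word: `u ∈ Σ*vΣ*`, `supp(u)` is nonempty, and `supp(u)` is minimal
among the nonempty supports of words in `Σ*vΣ*`. -/
def IsVMinimal {Q A : Type*} [Fintype Q] [DecidableEq Q] (δ : Q → A → Q) {k : ℕ}
    {nn : Fin k → ℕ}
    (e : Ralg δ →ₐ[ℂ] ∀ i : Fin k, Matrix (Fin (nn i)) (Fin (nn i)) ℂ)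
    (v u : List A) : Prop :=
  InFactor v u ∧ (suppW δ e u).Nonempty ∧
    ∀ z : List A, InFactor v z → suppW δ e z ⊆ suppW δ e u →
      suppW δ e z = ∅ ∨ suppW δ e z = suppW δ e u

/-- The `i`-th factor monoid `ℳ_i = θ_i(Σ*)`. -/
def factorMonoid {Q A : Type*} [Fintype Q] [DecidableEq Q] (δ : Q → A → Q) {k : ℕ}
    {nn : Fin k → ℕ}
    (e : Ralg δ →ₐ[ℂ] ∀ i : Fin k, Matrix (Fin (nn i)) (Fin (nn i)) ℂ)
    (i : Fin k) : Set (Matrix (Fin (nn i)) (Fin (nn i)) ℂ) :=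
  Set.range fun u : List A => theta δ e u i

/-- A two-sided ideal of the (sub)monoid `M`. -/
def IsSetIdeal {X : Type*} [Mul X] (M I : Set X) : Prop :=
  I ⊆ M ∧ ∀ a ∈ M, ∀ x ∈ I, a * x ∈ I ∧ x * a ∈ I

/-- `I` is a `0`-minimal (two-sided) ideal of the monoid `M`. -/
def IsZeroMinimalIdeal {X : Type*} [Mul X] [Zero X] (M I : Set X) : Prop :=
  IsSetIdeal M I ∧ (0 : X) ∈ I ∧ I ≠ {0} ∧
    ∀ J : Set X, IsSetIdeal M J → (0 : X) ∈ J → J ⊆ I → J ≠ {0} → J = I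

/-- `Rnk_i(g) = min {rk(u) : θ_i(u) = g}`. -/
def rnkElt {Q A : Type*} [Fintype Q] [DecidableEq Q] (δ : Q → A → Q) {k : ℕ}
    {nn : Fin k → ℕ}
    (e : Ralg δ →ₐ[ℂ] ∀ i : Fin k, Matrix (Fin (nn i)) (Fin (nn i)) ℂ)
    (i : Fin k) (g : Matrix (Fin (nn i)) (Fin (nn i)) ℂ) : ℕ :=
  sInf {m | ∃ u : List A, theta δ e u i = g ∧ wordRank δ u = m}

/-- `Rnk(ℐ_i) = min {Rnk_i(g) : g ∈ ℐ_i ∖ {0}}`. -/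
def rnkIdeal {Q A : Type*} [Fintype Q] [DecidableEq Q] (δ : Q → A → Q) {k : ℕ}
    {nn : Fin k → ℕ}
    (e : Ralg δ →ₐ[ℂ] ∀ i : Fin k, Matrix (Fin (nn i)) (Fin (nn i)) ℂ)
    (i : Fin k) (I : Set (Matrix (Fin (nn i)) (Fin (nn i)) ℂ)) : ℕ :=
  sInf {m | ∃ g ∈ I, g ≠ 0 ∧ rnkElt δ e i g = m}

/-- `w` `u`-represents `g`: `w ∈ Σ*uΣ*`, `θ_i(w) = g`, and either `g = 0` or `rk(w)` is
minimum among all words with the first two properties. -/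
def URepresents {Q A : Type*} [Fintype Q] [DecidableEq Q] (δ : Q → A → Q) {k : ℕ}
    {nn : Fin k → ℕ}
    (e : Ralg δ →ₐ[ℂ] ∀ i : Fin k, Matrix (Fin (nn i)) (Fin (nn i)) ℂ)
    (u : List A) (i : Fin k) (w : List A) (g : Matrix (Fin (nn i)) (Fin (nn i)) ℂ) : Prop :=
  InFactor u w ∧ theta δ e w i = g ∧
    (g = 0 ∨ ∀ w' : List A, InFactor u w' → theta δ e w' i = g → wordRank δ w ≤ wordRank δ w')

/-- The relation `σ_i` on `ℐ_i`. -/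
def sigmaRel {Q A : Type*} [Fintype Q] [DecidableEq Q] (δ : Q → A → Q) {k : ℕ}
    {nn : Fin k → ℕ}
    (e : Ralg δ →ₐ[ℂ] ∀ i : Fin k, Matrix (Fin (nn i)) (Fin (nn i)) ℂ)
    (i : Fin k) (u : List A)
    (g f : Matrix (Fin (nn i)) (Fin (nn i)) ℂ) : Prop :=
  g = f ∨ ∃ w₁ w₂ : List A, URepresents δ e u i w₁ g ∧ URepresents δ e u i w₂ f ∧
    1 < (imageSet δ w₁ ∩ imageSet δ w₂).card

/-- `T ⊆ [1,k]` is a core. -/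
def IsCore {Q A : Type*} [Fintype Q] [DecidableEq Q] (δ : Q → A → Q) {k : ℕ}
    {nn : Fin k → ℕ}
    (e : Ralg δ →ₐ[ℂ] ∀ i : Fin k, Matrix (Fin (nn i)) (Fin (nn i)) ℂ)
    (T : Set (Fin k)) : Prop :=
  ∀ x : List A, (∀ i ∈ T, theta δ e x i = 0) → ∀ i : Fin k, theta δ e x i = 0

/-- A minimal core. -/
def IsMinimalCore {Q A : Type*} [Fintype Q] [DecidableEq Q] (δ : Q → A → Q) {k : ℕ}
    {nn : Fin k → ℕ}
    (e : Ralg δ →ₐ[ℂ] ∀ i : Fin k, Matrix (Fin (nn i)) (Fin (nn i)) ℂ)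
    (T : Set (Fin k)) : Prop :=
  IsCore δ e T ∧ ∀ T' : Set (Fin k), T' ⊆ T → IsCore δ e T' → T' = T

/-- An automaton congruence. -/
def IsCongruence {Q A : Type*} (δ : Q → A → Q) (σ : Q → Q → Prop) : Prop :=
  Equivalence σ ∧ ∀ q p : Q, σ q p → ∀ u : List A, σ (actW δ q u) (actW δ p u)

/-- A simple automaton: the only congruences are the identity and the universal relation. -/
def IsSimple {Q A : Type*} (δ : Q → A → Q) : Prop :=
  ∀ σ : Q → Q → Prop, IsCongruence δ σ → σ = Eq ∨ σ = fun _ _ => True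

section AuxStmt5
set_option linter.unusedSectionVars false

variable {Q A : Type*} [Fintype Q] [DecidableEq Q] (δ : Q → A → Q)

theorem actW_append (q : Q) (x y : List A) :
    actW δ q (x ++ y) = actW δ (actW δ q x) y :=
  List.foldl_append

theorem actW_nil (q : Q) : actW δ q ([] : List A) = q := rfl

theorem piLin_comp (x y : List A) :
    piLin δ (x ++ y) = (piLin δ y).comp (piLin δ x) := by
  apply LinearMap.ext; intro v
  funext p
  show ∑ q ∈ Finset.univ.filter (fun q => actW δ q (x ++ y) = p), v q
      = ∑ q' ∈ Finset.univ.filter (fun q' => actW δ q' y = p),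
          ∑ q ∈ Finset.univ.filter (fun q => actW δ q x = q'), v q
  rw [Finset.sum_fiberwise_eq_sum_filter Finset.univ
    (Finset.univ.filter (fun q' => actW δ q' y = p)) (fun q => actW δ q x) v]
  apply Finset.sum_congr
  · ext q
    simp [actW_append]
  · intros; rfl

theorem piLin_nil : piLin δ ([] : List A) = LinearMap.id := by
  apply LinearMap.ext; intro v
  funext p
  show ∑ q ∈ Finset.univ.filter (fun q => actW δ q ([] : List A) = p), v q = v p
  rw [Finset.sum_filter]; simp only [actW_nil]
  convert (Finset.sum_ite_eq' Finset.univ p v).trans (if_pos (Finset.mem_univ p))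
  split_ifs with h <;> simp [h]

theorem rho_mul (x y : List A) : rho δ (x ++ y) = rho δ x * rho δ y := by
  unfold rho rhoEnd
  rw [← MulOpposite.op_mul]
  congr 1
  apply LinearMap.ext; intro ⟨v, hv⟩
  apply Subtype.ext
  show piLin δ (x ++ y) v = piLin δ y (piLin δ x v)
  rw [piLin_comp]; rfl

theorem rho_nil : rho δ ([] : List A) = 1 := by
  unfold rho rhoEnd
  rw [show (1 : (Module.End ℂ (Wperp Q))ᵐᵒᵖ) = MulOpposite.op 1 from rfl]
  congr 1
  apply LinearMap.ext; intro ⟨v, hv⟩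
  apply Subtype.ext
  show piLin δ ([] : List A) v = v
  rw [piLin_nil]; rfl

end AuxStmt5
section AuxStmt5b
set_option linter.unusedSectionVars false

variable {Q A : Type*} [Fintype Q] [DecidableEq Q] (δ : Q → A → Q)

theorem rhoR_mul (x y : List A) : rhoR δ (x ++ y) = rhoR δ x * rhoR δ y :=
  Subtype.ext (rho_mul δ x y)

theorem rhoR_nil : rhoR δ ([] : List A) = 1 :=
  Subtype.ext (rho_nil δ)

variable {k : ℕ} {nn : Fin k → ℕ}
  (e : Ralg δ →ₐ[ℂ] ∀ i : Fin k, Matrix (Fin (nn i)) (Fin (nn i)) ℂ)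

theorem theta_mul (x y : List A) (j : Fin k) :
    theta δ e (x ++ y) j = theta δ e x j * theta δ e y j := by
  unfold theta
  rw [rhoR_mul, map_mul]; rfl

theorem theta_nil (j : Fin k) : theta δ e ([] : List A) j = 1 := by
  unfold theta
  rw [rhoR_nil, map_one]; rfl

theorem rho_of_reset {w : List A} (hw : IsReset δ w) : rho δ w = 0 := by
  obtain ⟨p₀, hp₀⟩ := Finset.card_eq_one.mp hw
  have hall : ∀ q : Q, actW δ q w = p₀ := by
    intro q
    have : actW δ q w ∈ imageSet δ w := Finset.mem_image_of_mem _ (Finset.mem_univ q)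
    rw [hp₀] at this
    simpa using this
  have h0 : rhoEnd δ w = 0 := by
    apply LinearMap.ext; intro ⟨v, hv⟩
    apply Subtype.ext
    show piLin δ w v = 0
    funext p
    show ∑ q ∈ Finset.univ.filter (fun q => actW δ q w = p), v q = 0
    by_cases hp : p = p₀
    · have : Finset.univ.filter (fun q => actW δ q w = p) = Finset.univ := by
        apply Finset.filter_true_of_mem
        intro q _; exact (hall q).trans hp.symm
      rw [this]
      exact (mem_Wperp v).mp hv
    · have : Finset.univ.filter (fun q => actW δ q w = p) = ∅ := by
        apply Finset.filter_false_of_mem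
        intro q _
        rw [hall q]; exact fun h => hp h.symm
      rw [this, Finset.sum_empty]
  unfold rho
  rw [h0, MulOpposite.op_zero]

theorem theta_of_reset {w : List A} (hw : IsReset δ w) (j : Fin k) :
    theta δ e w j = 0 := by
  have : rhoR δ w = 0 := Subtype.ext (rho_of_reset δ hw)
  unfold theta
  rw [this, map_zero]; rfl

theorem imageSet_append (x y : List A) :
    imageSet δ (x ++ y) = (imageSet δ x).image (fun q => actW δ q y) := by
  ext p
  simp only [imageSet, Finset.mem_image]
  constructor
  · rintro ⟨q, -, rfl⟩
    exact ⟨actW δ q x, ⟨q, Finset.mem_univ q, rfl⟩, (actW_append δ q x y).symm⟩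
  · rintro ⟨q', ⟨q, -, rfl⟩, rfl⟩
    exact ⟨q, Finset.mem_univ q, actW_append δ q x y⟩

theorem imageSet_subset (x w : List A) : imageSet δ (x ++ w) ⊆ imageSet δ w := by
  rw [imageSet_append]
  intro p hp
  obtain ⟨q, -, rfl⟩ := Finset.mem_image.mp hp
  exact Finset.mem_image_of_mem _ (Finset.mem_univ q)

theorem wordRank_factor_le (x w y : List A) :
    wordRank δ (x ++ w ++ y) ≤ wordRank δ w := by
  unfold wordRank
  calc (imageSet δ (x ++ w ++ y)).card
      = ((imageSet δ (x ++ w)).image (fun q => actW δ q y)).card := by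
        rw [← imageSet_append]
    _ ≤ (imageSet δ (x ++ w)).card := Finset.card_image_le
    _ ≤ (imageSet δ w).card := Finset.card_le_card (imageSet_subset δ x w)

theorem wordRank_pos [Nonempty Q] (w : List A) : 1 ≤ wordRank δ w :=
  Finset.card_pos.mpr (Finset.univ_nonempty.image _)

end AuxStmt5b
theorem Algebra.adjoin_induction' {Q A : Type*} [Fintype Q] [DecidableEq Q] {δ : Q → A → Q}
    {p : Ralg δ → Prop}
    (mem : ∀ (x) (h : x ∈ Set.range (rho δ)), p ⟨x, Algebra.subset_adjoin h⟩)
    (algebraMap : ∀ r, p (algebraMap ℂ _ r)) (add : ∀ x y, p x → p y → p (x + y))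
    (mul : ∀ x y, p x → p y → p (x * y)) (x : Ralg δ) : p x :=
  Subtype.recOn x fun x hx =>
    Algebra.adjoin_induction (p := fun x hx => p ⟨x, hx⟩) mem algebraMap
      (fun x y hx hy => add ⟨x, hx⟩ ⟨y, hy⟩) (fun x y hx hy => mul ⟨x, hx⟩ ⟨y, hy⟩) hx

section AuxStmt5c
set_option linter.unusedSectionVars false

variable {Q A : Type*} [Fintype Q] [DecidableEq Q] (δ : Q → A → Q)

theorem rho_congr {u₁ u₂ : List A} (h : ∀ q, actW δ q u₁ = actW δ q u₂) :
    rho δ u₁ = rho δ u₂ := by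
  have hpi : piLin δ u₁ = piLin δ u₂ := by
    apply LinearMap.ext; intro v
    funext p
    show ∑ q ∈ Finset.univ.filter (fun q => actW δ q u₁ = p), v q
        = ∑ q ∈ Finset.univ.filter (fun q => actW δ q u₂ = p), v q
    congr 1
    apply Finset.filter_congr
    intro q _
    rw [h q]
  unfold rho rhoEnd
  congr 1
  apply LinearMap.ext; intro ⟨v, hv⟩
  apply Subtype.ext
  show piLin δ u₁ v = piLin δ u₂ v
  rw [hpi]

variable {k : ℕ} {nn : Fin k → ℕ}
  (e : Ralg δ →ₐ[ℂ] ∀ i : Fin k, Matrix (Fin (nn i)) (Fin (nn i)) ℂ)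

theorem theta_congr {u₁ u₂ : List A} (h : ∀ q, actW δ q u₁ = actW δ q u₂) (j : Fin k) :
    theta δ e u₁ j = theta δ e u₂ j := by
  unfold theta
  rw [show rhoR δ u₁ = rhoR δ u₂ from Subtype.ext (rho_congr δ h)]

theorem factorMonoid_finite (i : Fin k) : (factorMonoid δ e i).Finite := by
  classical
  set G : (Q → Q) → Matrix (Fin (nn i)) (Fin (nn i)) ℂ := fun φ =>
    if h : ∃ w : List A, (fun q => actW δ q w) = φ then theta δ e h.choose i else 0 with hG
  apply Set.Finite.subset (Set.finite_range G)
  rintro _ ⟨w, rfl⟩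
  refine ⟨fun q => actW δ q w, ?_⟩
  have hex : ∃ w' : List A, (fun q => actW δ q w') = (fun q => actW δ q w) := ⟨w, rfl⟩
  show (if h : ∃ w' : List A, (fun q => actW δ q w') = (fun q => actW δ q w)
      then theta δ e h.choose i else 0) = theta δ e w i
  rw [dif_pos hex]
  exact theta_congr δ e (fun q => congrFun hex.choose_spec q) i

theorem one_mem_factorMonoid (i : Fin k) : (1 : Matrix (Fin (nn i)) (Fin (nn i)) ℂ) ∈ factorMonoid δ e i :=
  ⟨[], theta_nil δ e i⟩

theorem mul_mem_factorMonoid {i : Fin k} {a b : Matrix (Fin (nn i)) (Fin (nn i)) ℂ}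
    (ha : a ∈ factorMonoid δ e i) (hb : b ∈ factorMonoid δ e i) :
    a * b ∈ factorMonoid δ e i := by
  obtain ⟨x, rfl⟩ := ha
  obtain ⟨y, rfl⟩ := hb
  exact ⟨x ++ y, theta_mul δ e x y i⟩

theorem span_factorMonoid_eq_top (he_surj : Function.Surjective e) (i : Fin k) :
    Submodule.span ℂ (factorMonoid δ e i) = ⊤ := by
  classical
  set Sm : Submodule ℂ (Matrix (Fin (nn i)) (Fin (nn i)) ℂ) :=
    Submodule.span ℂ (factorMonoid δ e i) with hSm
  have hmulc : ∀ a ∈ Sm, ∀ b ∈ Sm, a * b ∈ Sm := by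
    intro a ha b hb
    have h1 : a * b ∈ Sm * Sm := Submodule.mul_mem_mul ha hb
    have h2 : Sm * Sm ≤ Sm := by
      rw [hSm, Submodule.span_mul_span]
      apply Submodule.span_le.mpr
      intro z hz
      rw [Set.mem_mul] at hz
      obtain ⟨a', ha', b', hb', rfl⟩ := hz
      exact Submodule.subset_span (mul_mem_factorMonoid δ e ha' hb')
    exact h2 h1
  have key : ∀ x : Ralg δ, e x i ∈ Sm := by
    intro x
    induction x using Algebra.adjoin_induction' with
    | mem y hy =>
        obtain ⟨w, rfl⟩ := hy
        exact Submodule.subset_span ⟨w, rfl⟩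
    | algebraMap r =>
        show e (algebraMap ℂ (Ralg δ) r) i ∈ Sm
        rw [AlgHom.commutes]
        have : (algebraMap ℂ (∀ j : Fin k, Matrix (Fin (nn j)) (Fin (nn j)) ℂ) r) i
            = r • (1 : Matrix (Fin (nn i)) (Fin (nn i)) ℂ) := by
          rw [Pi.algebraMap_apply, Algebra.algebraMap_eq_smul_one]
        rw [this]
        exact Submodule.smul_mem _ _ (Submodule.subset_span (one_mem_factorMonoid δ e i))
    | add x y hx hy =>
        rw [map_add]
        exact Submodule.add_mem _ hx hy
    | mul x y hx hy =>
        rw [map_mul]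
        exact hmulc _ hx _ hy
  rw [eq_top_iff]
  intro m _
  obtain ⟨x, hx⟩ := he_surj (Function.update (0 : ∀ j : Fin k, Matrix (Fin (nn j)) (Fin (nn j)) ℂ) i m)
  have : e x i = m := by rw [hx, Function.update_self]
  rw [← this]
  exact key x

end AuxStmt5c
section AuxStmt5d
set_option linter.unusedSectionVars false

theorem matrix_zero_of_mul' {m : ℕ} {Amat g : Matrix (Fin m) (Fin m) ℂ}
    (hA : ∀ X : Matrix (Fin m) (Fin m) ℂ, Amat * X * g = 0) (hg : g ≠ 0) : Amat = 0 := by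
  obtain ⟨p, q, hpq⟩ : ∃ p q, g p q ≠ 0 := by
    by_contra h
    push_neg at h
    exact hg (by ext p q; simpa using h p q)
  ext a t
  have h2 := congrFun (congrFun (hA (Matrix.single t p 1)) a) q
  rw [Matrix.mul_apply] at h2
  have h3 : ∀ y : Fin m, ((Amat * Matrix.single t p 1 : Matrix (Fin m) (Fin m) ℂ)) a y * g y q
      = if y = p then Amat a t * g p q else 0 := by
    intro y
    by_cases hy : y = p
    · subst hy
      rw [Matrix.mul_single_apply_same, if_pos rfl, mul_one]
    · rw [Matrix.mul_single_apply_of_ne (hbj := hy), if_neg hy, zero_mul]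
  rw [Finset.sum_congr rfl (fun y _ => h3 y), Finset.sum_ite_eq' Finset.univ p
    (fun _ => Amat a t * g p q)] at h2
  simp only [Finset.mem_univ, if_true] at h2
  rcases mul_eq_zero.mp h2 with h | h
  · exact h
  · exact absurd h hpq

variable {Q A : Type*} [Fintype Q] [DecidableEq Q] {δ : Q → A → Q}
  {k : ℕ} {nn : Fin k → ℕ}
  {e : Ralg δ →ₐ[ℂ] ∀ i : Fin k, Matrix (Fin (nn i)) (Fin (nn i)) ℂ}

theorem sigmaRel_symm {i : Fin k} {u : List A} {g f : Matrix (Fin (nn i)) (Fin (nn i)) ℂ}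
    (h : sigmaRel δ e i u g f) : sigmaRel δ e i u f g := by
  rcases h with h | ⟨w₁, w₂, h1, h2, hc⟩
  · exact Or.inl h.symm
  · exact Or.inr ⟨w₂, w₁, h2, h1, by rwa [Finset.inter_comm]⟩

theorem transGen_sigmaRel_symm {i : Fin k} {u : List A}
    {g f : Matrix (Fin (nn i)) (Fin (nn i)) ℂ}
    (h : Relation.TransGen (sigmaRel δ e i u) g f) :
    Relation.TransGen (sigmaRel δ e i u) f g := by
  induction h with
  | single h1 => exact Relation.TransGen.single (sigmaRel_symm h1)
  | tail _ h1 ih => exact (Relation.TransGen.single (sigmaRel_symm h1)).trans ih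

theorem inFactor_self {u : List A} : InFactor u u := ⟨[], [], by simp⟩

theorem inFactor_append_left {u w : List A} (x : List A) (h : InFactor u w) :
    InFactor u (x ++ w) := by
  obtain ⟨a, b, rfl⟩ := h
  exact ⟨x ++ a, b, by simp [List.append_assoc]⟩

theorem inFactor_append_right {u w : List A} (y : List A) (h : InFactor u w) :
    InFactor u (w ++ y) := by
  obtain ⟨a, b, rfl⟩ := h
  exact ⟨a, b ++ y, by simp [List.append_assoc]⟩

end AuxStmt5d
theorem stmt5 {Q A : Type*} [Fintype Q] [DecidableEq Q] (δ : Q → A → Q)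
    {k : ℕ} {nn : Fin k → ℕ}
    (e : Ralg δ →ₐ[ℂ] ∀ i : Fin k, Matrix (Fin (nn i)) (Fin (nn i)) ℂ)
    (he_surj : Function.Surjective e)
    (he_ker : ∀ x : Ralg δ, e x = 0 ↔ (x : (Module.End ℂ (Wperp Q))ᵐᵒᵖ) ∈ RadSet δ)
    (Ii : ∀ i : Fin k, Set (Matrix (Fin (nn i)) (Fin (nn i)) ℂ))
    (hIi : ∀ i : Fin k, IsZeroMinimalIdeal (factorMonoid δ e i) (Ii i))
    (hIuniq : ∀ (i : Fin k) (J : Set (Matrix (Fin (nn i)) (Fin (nn i)) ℂ)),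
      IsZeroMinimalIdeal (factorMonoid δ e i) J → J = Ii i)
    (hn : 2 ≤ Fintype.card Q) (hsync : IsSynchronizing δ)
    (v u : List A) (hu : IsVMinimal δ e v u) (i : Fin k) (hi : i ∈ suppW δ e u) :
    ∃ R : Finset (Matrix (Fin (nn i)) (Fin (nn i)) ℂ),
      ↑R ⊆ Ii i ∧
      R.card ≤ packingNumber 2 (rnkIdeal δ e i (Ii i)) (Fintype.card Q) + 1 ∧
      ∀ g ∈ Ii i, ∃ h ∈ R, Relation.TransGen (sigmaRel δ e i u) g h := by
  classical
  have hQne : Nonempty Q := Fintype.card_pos_iff.mp (lt_of_lt_of_le (by norm_num) hn)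
  obtain ⟨⟨hIM, hId⟩, h0I, hInz, hminI⟩ := hIi i
  have hi' : theta δ e u i ≠ 0 := hi
  obtain ⟨z, hz⟩ := hsync
  have h0mem : (0 : Matrix (Fin (nn i)) (Fin (nn i)) ℂ) ∈ factorMonoid δ e i :=
    ⟨z, theta_of_reset δ e hz i⟩
  have h1mem := one_mem_factorMonoid δ e i
  have hSm := span_factorMonoid_eq_top δ e he_surj i
  set r := rnkIdeal δ e i (Ii i) with hrdef
  have hrsInf : r = sInf {m | ∃ g ∈ Ii i, g ≠ 0 ∧ rnkElt δ e i g = m} := rfl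
  have hrnkElt : ∀ g : Matrix (Fin (nn i)) (Fin (nn i)) ℂ,
      rnkElt δ e i g = sInf {m | ∃ w : List A, theta δ e w i = g ∧ wordRank δ w = m} :=
    fun _ => rfl
  -- a nonzero element of the ideal
  have hex0 : ∃ g ∈ Ii i, g ≠ 0 := by
    by_contra hco
    push_neg at hco
    exact hInz (Set.eq_singleton_iff_unique_mem.mpr ⟨h0I, fun x hx => hco x hx⟩)
  -- the element g₀ of minimal rank r and its word w₀
  have hrS : r ∈ {m | ∃ g ∈ Ii i, g ≠ 0 ∧ rnkElt δ e i g = m} := by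
    rw [hrsInf]
    apply Nat.sInf_mem
    obtain ⟨g, hg, hgne⟩ := hex0
    exact ⟨rnkElt δ e i g, g, hg, hgne, rfl⟩
  obtain ⟨g₀, hg₀I, hg₀ne, hg₀r⟩ := hrS
  have hw₀S : rnkElt δ e i g₀ ∈ {m | ∃ w : List A, theta δ e w i = g₀ ∧ wordRank δ w = m} := by
    rw [hrnkElt]
    apply Nat.sInf_mem
    obtain ⟨w, hw⟩ := hIM hg₀I
    exact ⟨wordRank δ w, w, hw, rfl⟩
  obtain ⟨w₀, hw₀g, hw₀r⟩ := hw₀S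
  rw [hg₀r] at hw₀r
  -- the set U of values of words containing u
  set U : Set (Matrix (Fin (nn i)) (Fin (nn i)) ℂ) :=
    {t | ∃ w : List A, InFactor u w ∧ theta δ e w i = t} with hUdef
  have hUM : U ⊆ factorMonoid δ e i := by
    rintro t ⟨w, -, rfl⟩; exact ⟨w, rfl⟩
  have hUabsorbL : ∀ a ∈ factorMonoid δ e i, ∀ t ∈ U, a * t ∈ U := by
    rintro a ⟨x, rfl⟩ t ⟨w, hwf, rfl⟩
    exact ⟨x ++ w, inFactor_append_left x hwf, by rw [theta_mul]⟩
  have hθuU : theta δ e u i ∈ U := ⟨u, inFactor_self, rfl⟩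
  -- K is nonzero
  have hKnz : ∃ t ∈ U, ∃ b ∈ factorMonoid δ e i, t * g₀ * b ≠ 0 := by
    by_contra hco
    push_neg at hco
    have s1 : ∀ mm ∈ factorMonoid δ e i, ∀ b ∈ factorMonoid δ e i,
        theta δ e u i * mm * g₀ * b = 0 := by
      rintro mm ⟨y, rfl⟩ b hb
      have ht : theta δ e (u ++ y) i ∈ U :=
        ⟨u ++ y, inFactor_append_right y inFactor_self, rfl⟩
      have h2 := hco _ ht b hb
      rwa [theta_mul] at h2
    have s2 : ∀ mm ∈ factorMonoid δ e i, ∀ Ymat : Matrix (Fin (nn i)) (Fin (nn i)) ℂ,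
        theta δ e u i * mm * g₀ * Ymat = 0 := by
      intro mm hmm Ymat
      set L : Matrix (Fin (nn i)) (Fin (nn i)) ℂ →ₗ[ℂ] Matrix (Fin (nn i)) (Fin (nn i)) ℂ :=
        LinearMap.mulLeft ℂ (theta δ e u i * mm * g₀) with hL
      have hker : Submodule.span ℂ (factorMonoid δ e i) ≤ LinearMap.ker L := by
        apply Submodule.span_le.mpr
        intro b hb
        exact LinearMap.mem_ker.mpr (s1 mm hmm b hb)
      have : Ymat ∈ LinearMap.ker L := hker (by rw [hSm]; trivial)
      exact LinearMap.mem_ker.mp this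
    have s3 : ∀ Xmat Ymat : Matrix (Fin (nn i)) (Fin (nn i)) ℂ,
        theta δ e u i * Xmat * g₀ * Ymat = 0 := by
      intro Xmat Ymat
      set L : Matrix (Fin (nn i)) (Fin (nn i)) ℂ →ₗ[ℂ] Matrix (Fin (nn i)) (Fin (nn i)) ℂ :=
        (LinearMap.mulRight ℂ Ymat).comp ((LinearMap.mulRight ℂ g₀).comp
          (LinearMap.mulLeft ℂ (theta δ e u i))) with hL
      have hker : Submodule.span ℂ (factorMonoid δ e i) ≤ LinearMap.ker L := by
        apply Submodule.span_le.mpr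
        intro mm hmm
        exact LinearMap.mem_ker.mpr (s2 mm hmm Ymat)
      have : Xmat ∈ LinearMap.ker L := hker (by rw [hSm]; trivial)
      exact LinearMap.mem_ker.mp this
    have s4 : ∀ Xmat : Matrix (Fin (nn i)) (Fin (nn i)) ℂ,
        theta δ e u i * Xmat * g₀ = 0 := by
      intro Xmat
      have h2 := s3 Xmat 1
      rwa [mul_one] at h2
    exact hi' (matrix_zero_of_mul' s4 hg₀ne)
  -- the ideal K = U g₀ M equals I
  set Kset : Set (Matrix (Fin (nn i)) (Fin (nn i)) ℂ) :=
    {x | ∃ t ∈ U, ∃ b ∈ factorMonoid δ e i, x = t * g₀ * b} with hKdef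
  have hKideal : IsSetIdeal (factorMonoid δ e i) Kset := by
    constructor
    · rintro x ⟨t, htU, b, hb, rfl⟩
      exact mul_mem_factorMonoid δ e (mul_mem_factorMonoid δ e (hUM htU) (hIM hg₀I)) hb
    · rintro a ha x ⟨t, htU, b, hb, rfl⟩
      constructor
      · exact ⟨a * t, hUabsorbL a ha t htU, b, hb, by rw [← mul_assoc, ← mul_assoc]⟩
      · exact ⟨t, htU, b * a, mul_mem_factorMonoid δ e hb ha, by rw [← mul_assoc]⟩
  have hK0 : (0 : Matrix (Fin (nn i)) (Fin (nn i)) ℂ) ∈ Kset :=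
    ⟨theta δ e u i, hθuU, 0, h0mem, by simp⟩
  have hKI : Kset ⊆ Ii i := by
    rintro x ⟨t, htU, b, hb, rfl⟩
    exact (hId b hb (t * g₀) (hId t (hUM htU) g₀ hg₀I).1).2
  have hKne : Kset ≠ {0} := by
    obtain ⟨t, htU, b, hb, hne⟩ := hKnz
    intro hKeq
    have hmem : t * g₀ * b ∈ Kset := ⟨t, htU, b, hb, rfl⟩
    rw [hKeq] at hmem
    exact hne hmem
  have hKeqI : Kset = Ii i := hminI Kset hKideal hK0 hKI hKne
  -- every nonzero element of I has a u-representing word of rank r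
  have key : ∀ g ∈ Ii i, g ≠ 0 →
      ∃ w : List A, URepresents δ e u i w g ∧ wordRank δ w = r := by
    intro g hgI hgne
    have hgK : g ∈ Kset := by rw [hKeqI]; exact hgI
    obtain ⟨t, htU, b, hb, hgeq⟩ := hgK
    obtain ⟨w₁, hw₁f, rfl⟩ := htU
    obtain ⟨y, rfl⟩ := hb
    have hWfac : InFactor u (w₁ ++ w₀ ++ y) :=
      inFactor_append_right y (inFactor_append_right w₀ hw₁f)
    have hWθ : theta δ e (w₁ ++ w₀ ++ y) i = g := by
      rw [theta_mul δ e (w₁ ++ w₀) y, theta_mul δ e w₁ w₀, hw₀g, hgeq]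
    have hWr : wordRank δ (w₁ ++ w₀ ++ y) ≤ r := by
      rw [← hw₀r]
      exact wordRank_factor_le δ w₁ w₀ y
    have hSSne : {m | ∃ w' : List A, InFactor u w' ∧ theta δ e w' i = g ∧
        wordRank δ w' = m}.Nonempty :=
      ⟨wordRank δ (w₁ ++ w₀ ++ y), w₁ ++ w₀ ++ y, hWfac, hWθ, rfl⟩
    obtain ⟨wg, hwgfac, hwgθ, hwgr⟩ := Nat.sInf_mem hSSne
    have hmin2 : ∀ w' : List A, InFactor u w' → theta δ e w' i = g →
        wordRank δ wg ≤ wordRank δ w' := by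
      intro w' h1 h2
      rw [hwgr]
      exact Nat.sInf_le ⟨w', h1, h2, rfl⟩
    have hle : wordRank δ wg ≤ r := le_trans (hmin2 _ hWfac hWθ) hWr
    have hge : r ≤ wordRank δ wg := by
      have h1 : rnkElt δ e i g ≤ wordRank δ wg := by
        rw [hrnkElt]
        exact Nat.sInf_le ⟨wg, hwgθ, rfl⟩
      have h2 : r ≤ rnkElt δ e i g := by
        rw [hrsInf]
        exact Nat.sInf_le ⟨g, hgI, hgne, rfl⟩
      exact le_trans h2 h1
    exact ⟨wg, ⟨hwgfac, hwgθ, Or.inr hmin2⟩, le_antisymm hle hge⟩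
  -- r ≥ 2
  have hr2 : 2 ≤ r := by
    by_contra hlt
    push_neg at hlt
    have h1 : 1 ≤ wordRank δ w₀ := wordRank_pos δ w₀
    have hres : IsReset δ w₀ := by
      show wordRank δ w₀ = 1
      omega
    apply hg₀ne
    rw [← hw₀g]
    exact theta_of_reset δ e hres i
  -- the finite set of nonzero elements of I
  have hIfin : (Ii i).Finite := (factorMonoid_finite δ e i).subset hIM
  set T : Finset (Matrix (Fin (nn i)) (Fin (nn i)) ℂ) :=
    hIfin.toFinset.filter (fun g => g ≠ 0) with hTdef
  have hTmem : ∀ h ∈ T, h ∈ Ii i ∧ h ≠ 0 := by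
    intro h hh
    rw [hTdef, Finset.mem_filter, Set.Finite.mem_toFinset] at hh
    exact hh
  have key2 : ∀ h ∈ T, ∃ w : List A, URepresents δ e u i w h ∧ wordRank δ w = r :=
    fun h hh => key h (hTmem h hh).1 (hTmem h hh).2
  -- a maximal pairwise-unrelated subset R' of T
  set P : Finset (Matrix (Fin (nn i)) (Fin (nn i)) ℂ) → Prop := fun R' =>
    ∀ g ∈ R', ∀ h ∈ R', g ≠ h → ¬ Relation.TransGen (sigmaRel δ e i u) g h with hPdef
  have hPne : (T.powerset.filter P).Nonempty := by
    refine ⟨∅, Finset.mem_filter.mpr ⟨Finset.empty_mem_powerset T, ?_⟩⟩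
    intro g hg
    exact absurd hg (Finset.notMem_empty g)
  obtain ⟨R', hR'mem, hR'max⟩ := Finset.exists_max_image (T.powerset.filter P)
    Finset.card hPne
  rw [Finset.mem_filter, Finset.mem_powerset] at hR'mem
  obtain ⟨hR'T, hR'P⟩ := hR'mem
  -- covering property
  have hcover : ∀ g ∈ T, ∃ h ∈ R', Relation.TransGen (sigmaRel δ e i u) g h := by
    intro g hgT
    by_cases hg : g ∈ R'
    · exact ⟨g, hg, Relation.TransGen.single (Or.inl rfl)⟩
    by_contra hnc
    push_neg at hnc
    have hins : insert g R' ∈ T.powerset.filter P := by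
      rw [Finset.mem_filter, Finset.mem_powerset]
      constructor
      · exact Finset.insert_subset hgT hR'T
      · intro a ha b hb hne hTG
        rcases Finset.mem_insert.mp ha with rfl | haR
        · rcases Finset.mem_insert.mp hb with rfl | hbR
          · exact hne rfl
          · exact hnc b hbR hTG
        · rcases Finset.mem_insert.mp hb with rfl | hbR
          · exact hnc a haR (transGen_sigmaRel_symm hTG)
          · exact hR'P a haR b hbR hne hTG
    have hcard := hR'max _ hins
    rw [Finset.card_insert_of_notMem hg] at hcard
    omega
  -- the packing family
  set eqv : Q ≃ Fin (Fintype.card Q) := Fintype.equivFin Q with heqv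
  set wrep : {g // g ∈ R'} → List A := fun x => (key2 x.1 (hR'T x.2)).choose with hwrepdef
  have hwrep : ∀ x : {g // g ∈ R'},
      URepresents δ e u i (wrep x) x.1 ∧ wordRank δ (wrep x) = r :=
    fun x => (key2 x.1 (hR'T x.2)).choose_spec
  -- if the images of two representing words share ≥ 2 states, the elements are related
  have hrel : ∀ x y : {g // g ∈ R'},
      1 < ((imageSet δ (wrep x)) ∩ (imageSet δ (wrep y))).card → x = y := by
    intro x y hxy
    by_contra hne
    have hne' : x.1 ≠ y.1 := fun h12 => hne (Subtype.ext h12)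
    exact hR'P x.1 x.2 y.1 y.2 hne'
      (Relation.TransGen.single (Or.inr ⟨wrep x, wrep y, (hwrep x).1, (hwrep y).1, hxy⟩))
  set ψ : {g // g ∈ R'} → Finset (Fin (Fintype.card Q)) :=
    fun x => (imageSet δ (wrep x)).image eqv with hψdef
  set F : Finset (Finset (Fin (Fintype.card Q))) := R'.attach.image ψ with hFdef
  have hψcard : ∀ x : {g // g ∈ R'}, (ψ x).card = r := by
    intro x
    rw [hψdef]
    rw [Finset.card_image_of_injective _ eqv.injective]
    exact (hwrep x).2
  have hψinj : Function.Injective ψ := by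
    intro x y hxy
    apply hrel
    have him : imageSet δ (wrep x) = imageSet δ (wrep y) :=
      Finset.image_injective eqv.injective hxy
    rw [him, Finset.inter_self]
    have h2 : (imageSet δ (wrep y)).card = r := (hwrep y).2
    omega
  have hFcard : F.card = R'.card := by
    rw [hFdef, Finset.card_image_of_injective _ hψinj, Finset.card_attach]
  have hFsizes : ∀ S ∈ F, S.card = r := by
    intro S hS
    obtain ⟨x, -, rfl⟩ := Finset.mem_image.mp hS
    exact hψcard x
  have hFpack : ∀ T2 : Finset (Fin (Fintype.card Q)), T2.card = 2 →
      (F.filter fun S => T2 ⊆ S).card ≤ 1 := by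
    intro T2 hT2
    rw [Finset.card_le_one]
    intro S1 hS1 S2 hS2
    rw [Finset.mem_filter] at hS1 hS2
    obtain ⟨x, -, rfl⟩ := Finset.mem_image.mp hS1.1
    obtain ⟨y, -, rfl⟩ := Finset.mem_image.mp hS2.1
    by_cases hxy : x = y
    · rw [hxy]
    have hsub : T2 ⊆ ψ x ∩ ψ y := Finset.subset_inter hS1.2 hS2.2
    have hinter : ψ x ∩ ψ y = ((imageSet δ (wrep x)) ∩ (imageSet δ (wrep y))).image eqv := by
      rw [hψdef]
      exact (Finset.image_inter _ _ eqv.injective).symm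
    have hcard2 : 1 < ((imageSet δ (wrep x)) ∩ (imageSet δ (wrep y))).card := by
      have h1 := Finset.card_le_card hsub
      rw [hinter, Finset.card_image_of_injective _ eqv.injective] at h1
      omega
    exact absurd (hrel x y hcard2) hxy
  -- bound via the packing number
  have hmemset : R'.card ∈ {m | ∃ F' : Finset (Finset (Fin (Fintype.card Q))),
      F'.card = m ∧ (∀ S ∈ F', S.card = r) ∧
      ∀ T2 : Finset (Fin (Fintype.card Q)), T2.card = 2 →
        (F'.filter fun S => T2 ⊆ S).card ≤ 1} := ⟨F, hFcard, hFsizes, hFpack⟩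
  have hbdd : BddAbove {m | ∃ F' : Finset (Finset (Fin (Fintype.card Q))),
      F'.card = m ∧ (∀ S ∈ F', S.card = r) ∧
      ∀ T2 : Finset (Fin (Fintype.card Q)), T2.card = 2 →
        (F'.filter fun S => T2 ⊆ S).card ≤ 1} := by
    refine ⟨2 ^ Fintype.card Q, ?_⟩
    rintro m ⟨F', hF'card, -, -⟩
    have hsub : F' ⊆ (Finset.univ : Finset (Fin (Fintype.card Q))).powerset :=
      fun S _ => Finset.mem_powerset.mpr (Finset.subset_univ S)
    have := Finset.card_le_card hsub
    rw [Finset.card_powerset, Finset.card_univ, Fintype.card_fin] at this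
    omega
  have hR'bound : R'.card ≤ packingNumber 2 r (Fintype.card Q) :=
    le_csSup hbdd hmemset
  -- conclusion
  refine ⟨insert 0 R', ?_, ?_, ?_⟩
  · intro x hx
    rcases Finset.mem_insert.mp hx with rfl | hxR
    · exact h0I
    · exact (hTmem x (hR'T hxR)).1
  · calc (insert (0 : Matrix (Fin (nn i)) (Fin (nn i)) ℂ) R').card
        ≤ R'.card + 1 := Finset.card_insert_le _ _
      _ ≤ packingNumber 2 r (Fintype.card Q) + 1 := by omega
  · intro g hgI
    by_cases hgz : g = 0
    · exact ⟨0, Finset.mem_insert_self 0 R',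
        Relation.TransGen.single (Or.inl hgz)⟩
    · have hgT : g ∈ T := by
        rw [hTdef, Finset.mem_filter, Set.Finite.mem_toFinset]
        exact ⟨hgI, hgz⟩
      obtain ⟨h, hhR, hTG⟩ := hcover g hgT
      exact ⟨h, Finset.mem_insert_of_mem hhR, hTG⟩

end
end

section
/- Let u be a v-minimal word of a synchronizing automaton 𝒜, let i ∈ supp(u) and g ∈ ℐ_i. If a word w u-represents g, then either g = θ_i(w) = 0_i, or supp(w) = supp(u). -/
open scoped BigOperators

set_option synthInstance.maxHeartbeats 1000000
set_option maxHeartbeats 1000000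

noncomputable section

theorem piLin_append' {Q A : Type*} [Fintype Q] [DecidableEq Q] (δ : Q → A → Q)
    (x y : List A) : piLin δ (x ++ y) = (piLin δ y).comp (piLin δ x) := by
  apply LinearMap.ext
  intro v
  funext p
  simp only [piLin, LinearMap.coe_mk, AddHom.coe_mk, LinearMap.comp_apply]
  rw [Finset.sum_filter, Finset.sum_filter]
  have : ∀ p' : Q, (∑ q ∈ Finset.univ.filter (fun q => actW δ q x = p'), v q)
      = ∑ q : Q, if actW δ q x = p' then v q else 0 := fun p' => Finset.sum_filter _ _
  simp only [this]
  have hR : ∀ p' : Q, (if actW δ p' y = p then ∑ q : Q, if actW δ q x = p' then v q else 0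
      else 0) = ∑ q : Q, if actW δ q x = p' then (if actW δ p' y = p then v q else 0)
      else 0 := by
    intro p'
    by_cases h2 : actW δ p' y = p
    · simp [h2]
    · simp [h2]
  simp only [hR]
  rw [Finset.sum_comm]
  apply Finset.sum_congr rfl
  intro q _
  have hact : actW δ q (x ++ y) = actW δ (actW δ q x) y := List.foldl_append
  rw [hact]
  have h3 : ∀ p' : Q, (if actW δ q x = p' then (if actW δ p' y = p then v q else 0) else 0)
      = if actW δ q x = p' then (if actW δ (actW δ q x) y = p then v q else 0) else 0 := by
    intro p'
    by_cases h1 : actW δ q x = p'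
    · subst h1; rfl
    · simp [h1]
  simp only [h3]
  rw [Finset.sum_ite_eq Finset.univ (actW δ q x)
    (fun _ => if actW δ (actW δ q x) y = p then v q else 0)]
  simp

theorem rho_append {Q A : Type*} [Fintype Q] [DecidableEq Q] (δ : Q → A → Q)
    (x y : List A) : rho δ (x ++ y) = rho δ x * rho δ y := by
  have hEnd : rhoEnd δ (x ++ y) = rhoEnd δ y * rhoEnd δ x := by
    apply LinearMap.ext
    intro ⟨v, hv⟩
    apply Subtype.ext
    show piLin δ (x ++ y) v = piLin δ y (piLin δ x v)
    rw [piLin_append' δ x y]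
    rfl
  show MulOpposite.op (rhoEnd δ (x ++ y)) = _
  rw [hEnd]
  rfl

theorem theta_append {Q A : Type*} [Fintype Q] [DecidableEq Q] (δ : Q → A → Q) {k : ℕ}
    {nn : Fin k → ℕ}
    (e : Ralg δ →ₐ[ℂ] ∀ i : Fin k, Matrix (Fin (nn i)) (Fin (nn i)) ℂ)
    (x y : List A) (i : Fin k) :
    theta δ e (x ++ y) i = theta δ e x i * theta δ e y i := by
  have h : rhoR δ (x ++ y) = rhoR δ x * rhoR δ y := by
    apply Subtype.ext
    exact rho_append δ x y
  unfold theta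
  rw [h, map_mul]
  rfl

theorem stmt11 {Q A : Type*} [Fintype Q] [DecidableEq Q] (δ : Q → A → Q)
    {k : ℕ} {nn : Fin k → ℕ}
    (e : Ralg δ →ₐ[ℂ] ∀ i : Fin k, Matrix (Fin (nn i)) (Fin (nn i)) ℂ)
    (he_surj : Function.Surjective e)
    (he_ker : ∀ x : Ralg δ, e x = 0 ↔ (x : (Module.End ℂ (Wperp Q))ᵐᵒᵖ) ∈ RadSet δ)
    (Ii : ∀ i : Fin k, Set (Matrix (Fin (nn i)) (Fin (nn i)) ℂ))
    (hIi : ∀ i : Fin k, IsZeroMinimalIdeal (factorMonoid δ e i) (Ii i))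
    (hIuniq : ∀ (i : Fin k) (J : Set (Matrix (Fin (nn i)) (Fin (nn i)) ℂ)),
      IsZeroMinimalIdeal (factorMonoid δ e i) J → J = Ii i)
    (hsync : IsSynchronizing δ)
    (v u : List A) (hu : IsVMinimal δ e v u) (i : Fin k) (hi : i ∈ suppW δ e u)
    (g : Matrix (Fin (nn i)) (Fin (nn i)) ℂ) (hg : g ∈ Ii i)
    (w : List A) (hw : URepresents δ e u i w g) :
    (g = 0 ∧ theta δ e w i = 0) ∨ suppW δ e w = suppW δ e u := by
  obtain ⟨⟨a, b, hab⟩, hθ, _⟩ := hw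
  obtain ⟨hufac, hne, hmin⟩ := hu
  obtain ⟨c, d, hcd⟩ := hufac
  -- v is a factor of w
  have hvw : InFactor v w := by
    refine ⟨a ++ c, d ++ b, ?_⟩
    rw [hab, hcd]
    simp [List.append_assoc]
  -- supp w ⊆ supp u
  have hsub : suppW δ e w ⊆ suppW δ e u := by
    intro j hj
    by_contra hju
    have hju0 : theta δ e u j = 0 := not_not.mp hju
    apply hj
    have : theta δ e w j = theta δ e a j * theta δ e u j * theta δ e b j := by
      rw [hab, theta_append δ e (a ++ u) b j, theta_append δ e a u j]
    rw [this, hju0, mul_zero, zero_mul]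
  rcases hmin w hvw hsub with h0 | hsupp
  · left
    have hwi0 : theta δ e w i = 0 := by
      by_contra hne0
      have : i ∈ suppW δ e w := hne0
      rw [h0] at this
      exact this
    exact ⟨hθ.symm.trans hwi0, hwi0⟩
  · right
    exact hsupp

end
end
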